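/- Let β > 0, M > 0, and set δ₀ = (1/2)·3^{β+1}/(2·3^{β+1} + (2M)^{β+1}). Let 0 < δ < δ₀ and let a, b ∈ [2 − δ, M]. Let c > 0 satisfy c ≤ min(a,b) + δ and c ≤ max(a,b) − (1 − 2δ). Then a^{−β} + b^{−β} − 2c^{−β} ≤ −(1/2)·β·M^{−(β+1)}. -/

import Mathlib

open Real

private lemma rpow_anti {β x y : ℝ} (hβ : 0 < β) (hx : 0 < x) (hxy : x ≤ y) :
    y ^ (-β) ≤ x ^ (-β) :=
  Real.rpow_le_rpow_of_nonpos hx hxy (by linarith)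

private lemma mvt_rpow {β x y : ℝ} (hβ : 0 < β) (hx : 0 < x) (hxy : x < y) :
    ∃ t ∈ Set.Ioo x y, x ^ (-β) - y ^ (-β) = β * t ^ (-(β + 1)) * (y - x) := by
  obtain ⟨t, ht, heq⟩ := exists_hasDerivAt_eq_slope (fun z => z ^ (-β))
    (fun z => (-β) * z ^ (-β - 1)) hxy
    (by
      apply ContinuousOn.rpow_const continuousOn_id
      intro z hz
      exact Or.inl (ne_of_gt (lt_of_lt_of_le hx hz.1)))
    (fun z hz => Real.hasDerivAt_rpow_const (Or.inl (ne_of_gt (lt_trans hx hz.1))))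
  refine ⟨t, ht, ?_⟩
  have hyx : y - x ≠ 0 := by intro h; nlinarith
  have h1 : -β * t ^ (-β - 1) * (y - x) = y ^ (-β) - x ^ (-β) := by
    rw [heq]; field_simp
  have h2 : -(β + 1) = -β - 1 := by ring
  rw [h2]; linarith [h1]

private lemma claim1 {β x y : ℝ} (hβ : 0 < β) (hx : 0 < x) (hxy : x ≤ y) :
    x ^ (-β) - y ^ (-β) ≤ β * x ^ (-(β + 1)) * (y - x) := by
  rcases eq_or_lt_of_le hxy with rfl | hlt
  · simp
  obtain ⟨t, ht, heq⟩ := mvt_rpow hβ hx hlt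
  rw [heq]
  have h1 : t ^ (-(β + 1)) ≤ x ^ (-(β + 1)) := rpow_anti (by linarith) hx ht.1.le
  have hyx : 0 ≤ y - x := by linarith
  have := mul_le_mul_of_nonneg_right h1 hyx
  nlinarith

private lemma claim2 {β x y : ℝ} (hβ : 0 < β) (hx : 0 < x) (hxy : x ≤ y) :
    β * y ^ (-(β + 1)) * (y - x) ≤ x ^ (-β) - y ^ (-β) := by
  rcases eq_or_lt_of_le hxy with rfl | hlt
  · simp
  obtain ⟨t, ht, heq⟩ := mvt_rpow hβ hx hlt
  rw [heq]
  have h1 : y ^ (-(β + 1)) ≤ t ^ (-(β + 1)) :=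
    rpow_anti (by linarith) (lt_trans hx ht.1) ht.2.le
  have hyx : 0 ≤ y - x := by linarith
  have := mul_le_mul_of_nonneg_right h1 hyx
  nlinarith

private lemma final_step {β T P Q δ : ℝ} (hβ : 0 < β) (hTpos : 0 < T)
    (hPpos : 0 < P) (hQpos : 0 < Q) (hδpos : 0 < δ)
    (hδ' : δ * (2 * T + Q * P) ≤ (1/2) * T) :
    β * δ * (Q / T) - β * (1 - 2 * δ) * (1 / P) ≤ -(1/2) * β * (1 / P) := by
  have key : δ * (Q / T) + 2 * δ * (1 / P) ≤ (1/2) * (1 / P) := by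
    rw [show δ * (Q / T) + 2 * δ * (1 / P) = δ * (Q * P + 2 * T) / (T * P) by
          field_simp,
        show (1:ℝ)/2 * (1 / P) = ((1/2) * T) / (T * P) by field_simp,
        div_le_div_iff₀ (by positivity) (by positivity)]
    nlinarith [mul_le_mul_of_nonneg_right hδ' (le_of_lt (mul_pos hTpos hPpos))]
  nlinarith [mul_le_mul_of_nonneg_left key hβ.le]

/-- Auxiliary inequality (Lemma `auxiliary` of the paper). -/
theorem auxiliary_inequality (β M δ a b c : ℝ) (hβ : 0 < β) (hM : 0 < M)
    (hδpos : 0 < δ)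
    (hδ : δ < (1/2) * 3 ^ (β + 1) / (2 * 3 ^ (β + 1) + (2 * M) ^ (β + 1)))
    (ha : a ∈ Set.Icc (2 - δ) M) (hb : b ∈ Set.Icc (2 - δ) M)
    (hc : 0 < c) (hc1 : c ≤ min a b + δ) (hc2 : c ≤ max a b - (1 - 2 * δ)) :
    a ^ (-β) + b ^ (-β) - 2 * c ^ (-β) ≤ -(1/2) * β * M ^ (-(β + 1)) := by
  set T : ℝ := 3 ^ (β + 1) with hT
  set S : ℝ := (2 * M) ^ (β + 1) with hS
  have hTpos : 0 < T := Real.rpow_pos_of_pos (by norm_num) _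
  have hSpos : 0 < S := Real.rpow_pos_of_pos (by linarith) _
  have hδ4 : δ < 1/4 := by
    have : (1/2) * T / (2 * T + S) < 1/4 := by
      rw [div_lt_iff₀ (by linarith)]; nlinarith
    linarith
  set m := min a b with hm
  set L := max a b with hL
  have hm2 : 2 - δ ≤ m := le_min ha.1 hb.1
  have hLM : L ≤ M := max_le ha.2 hb.2
  have hmpos : 0 < m := by linarith
  have hLm : m ≤ L := min_le_max
  have hLx : (0:ℝ) < L - (1 - 2 * δ) := by
    have : 2 - δ ≤ L := le_trans hm2 hLm
    linarith
  have hsum : a ^ (-β) + b ^ (-β) = m ^ (-β) + L ^ (-β) := by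
    rcases le_total a b with h | h
    · rw [hm, hL, min_eq_left h, max_eq_right h]
    · rw [hm, hL, min_eq_right h, max_eq_left h]; ring
  clear_value m L
  -- Step A
  have hA : m ^ (-β) - c ^ (-β) ≤ β * δ * (3/2 : ℝ) ^ (-(β + 1)) := by
    have h1 : (m + δ) ^ (-β) ≤ c ^ (-β) := rpow_anti hβ hc hc1
    have h2 : m ^ (-β) - (m + δ) ^ (-β) ≤ β * m ^ (-(β + 1)) * δ := by
      have := claim1 hβ hmpos (show m ≤ m + δ by linarith)
      simpa using this
    have h3 : m ^ (-(β + 1)) ≤ (3/2 : ℝ) ^ (-(β + 1)) :=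
      rpow_anti (by linarith) (by norm_num) (by linarith)
    have h4 := mul_le_mul_of_nonneg_left h3 (by positivity : (0:ℝ) ≤ β * δ)
    nlinarith
  -- Step B
  have hB : L ^ (-β) - c ^ (-β) ≤ -(β * (1 - 2 * δ) * M ^ (-(β + 1))) := by
    have h1 : (L - (1 - 2 * δ)) ^ (-β) ≤ c ^ (-β) := rpow_anti hβ hc hc2
    have h2 := claim2 hβ hLx (show L - (1 - 2 * δ) ≤ L by linarith)
    have h3 : M ^ (-(β + 1)) ≤ L ^ (-(β + 1)) :=
      rpow_anti (by linarith) (by linarith) hLM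
    have h5 : (0:ℝ) ≤ β * (1 - 2 * δ) := by nlinarith
    have h4 := mul_le_mul_of_nonneg_left h3 h5
    nlinarith
  -- final numeric step
  have hfin : β * δ * (3/2 : ℝ) ^ (-(β + 1)) - β * (1 - 2 * δ) * M ^ (-(β + 1))
      ≤ -(1/2) * β * M ^ (-(β + 1)) := by
    set P : ℝ := M ^ (β + 1) with hP
    set Q : ℝ := (2:ℝ) ^ (β + 1) with hQ
    have hPpos : 0 < P := Real.rpow_pos_of_pos hM _
    have hQpos : 0 < Q := Real.rpow_pos_of_pos (by norm_num) _
    have h32 : (3/2 : ℝ) ^ (-(β + 1)) = Q / T := by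
      rw [Real.rpow_neg (by norm_num), Real.div_rpow (by norm_num) (by norm_num),
        inv_div, hT, hQ]
    have hMn : M ^ (-(β + 1)) = 1 / P := by
      rw [Real.rpow_neg hM.le, hP, one_div]
    have hSQ : S = Q * P := by
      rw [hS, Real.mul_rpow (by norm_num) hM.le, hQ, hP]
    clear_value P Q
    have hδ' : δ * (2 * T + Q * P) ≤ (1/2) * T := by
      rw [← hSQ]
      exact le_of_lt ((lt_div_iff₀ (by positivity)).mp hδ)
    rw [h32, hMn]
    exact final_step hβ hTpos hPpos hQpos hδpos hδ'
  calc a ^ (-β) + b ^ (-β) - 2 * c ^ (-β)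
      = (m ^ (-β) - c ^ (-β)) + (L ^ (-β) - c ^ (-β)) := by rw [hsum]; ring
    _ ≤ β * δ * (3/2 : ℝ) ^ (-(β + 1)) - β * (1 - 2 * δ) * M ^ (-(β + 1)) := by linarith
    _ ≤ -(1/2) * β * M ^ (-(β + 1)) := hfin
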